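/- arXiv:2409.06138 — 3 statements merged into one kernel-verified Lean document; each statement's English description precedes it below -/
import Mathlib

section
/- Let X be a finite graph admitting an automorphism ρ that is (m,p)-semiregular for a prime p, i.e., ρ has exactly m orbits on V(X), each of size p. Let 𝓟 be the set of orbits of ⟨ρ⟩ and let C be a cycle of length k in the quotient graph X_𝓟. Then the subgraph of X induced by the union of the orbits in C (the lift of C) either contains a cycle of length kp, or it consists of p pairwise disjoint k-cycles; moreover, in the latter case, d(S,S') = 1 for every edge {S,S'} of C, where d(S,S') is the valency of the regular bipartite graph X[S,S']. -/
/-- The projection of a vertex to its orbit under the group generated by a permutation. -/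
def orbitProj {V : Type*} (f : Equiv.Perm V) (x : V) :
    Quotient (MulAction.orbitRel (Subgroup.zpowers f) V) :=
  Quotient.mk (MulAction.orbitRel (Subgroup.zpowers f) V) x

/-- The quotient graph of `X` with respect to the orbits of `⟨f⟩`. -/
def orbitQuotientGraph {V : Type*} (X : SimpleGraph V) (f : Equiv.Perm V) :
    SimpleGraph (Quotient (MulAction.orbitRel (Subgroup.zpowers f) V)) where
  Adj A B := A ≠ B ∧ ∃ a b : V, orbitProj f a = A ∧ orbitProj f b = B ∧ X.Adj a b
  symm := by
    constructor
    rintro A B ⟨hne, a, b, ha, hb, hab⟩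
    exact ⟨hne.symm, b, a, hb, ha, hab.symm⟩
  loopless := by constructor; rintro A ⟨hne, _⟩; exact hne rfl

open SimpleGraph

namespace MarusicAux

variable {V : Type*} {X : SimpleGraph V}

/-- Build a walk from a sequence of pairwise-adjacent vertices. -/
def seqWalk (X : SimpleGraph V) (u : ℕ → V) :
    ∀ n : ℕ, (∀ i < n, X.Adj (u i) (u (i + 1))) → X.Walk (u 0) (u n)
  | 0, _ => Walk.nil
  | (n + 1), h =>
    (seqWalk X u n (fun i hi => h i (by omega))).concat (h n (by omega))

lemma seqWalk_length (u : ℕ → V) (n : ℕ) (h : ∀ i < n, X.Adj (u i) (u (i + 1))) :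
    (seqWalk X u n h).length = n := by
  induction n with
  | zero => rfl
  | succ n ih => simp [seqWalk, Walk.length_concat, ih]

lemma seqWalk_support (u : ℕ → V) (n : ℕ) (h : ∀ i < n, X.Adj (u i) (u (i + 1))) :
    (seqWalk X u n h).support = (List.range (n + 1)).map u := by
  induction n with
  | zero => simp [seqWalk, List.range_succ]
  | succ n ih =>
    rw [List.range_succ]
    simp only [seqWalk, Walk.support_concat, ih]
    simp

lemma seqWalk_edges (u : ℕ → V) (n : ℕ) (h : ∀ i < n, X.Adj (u i) (u (i + 1))) :
    (seqWalk X u n h).edges = (List.range n).map (fun i => s(u i, u (i + 1))) := by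
  induction n with
  | zero => simp [seqWalk]
  | succ n ih =>
    rw [List.range_succ]
    simp only [seqWalk, Walk.edges_concat, ih]
    simp

lemma cycle_of_seq (X : SimpleGraph V) (u : ℕ → V) (N : ℕ) (hN : 3 ≤ N)
    (hadj : ∀ i < N, X.Adj (u i) (u (i + 1))) (hclosed : u N = u 0)
    (hinj : ∀ i < N, ∀ j < N, u i = u j → i = j) :
    ∃ w : X.Walk (u 0) (u 0), w.IsCycle ∧ w.length = N ∧
      ∀ x, x ∈ w.support ↔ ∃ i < N, u i = x := by
  have hinj' : ∀ i ≤ N, ∀ j ≤ N, u i = u j → (i = j ∨ (i = 0 ∧ j = N) ∨ (i = N ∧ j = 0)) := by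
    intro i hi j hj hij
    rcases Nat.lt_or_ge i N with hiN | hiN
    · rcases Nat.lt_or_ge j N with hjN | hjN
      · exact Or.inl (hinj i hiN j hjN hij)
      · have hjN' : j = N := le_antisymm hj hjN
        rw [hjN', hclosed] at hij
        have := hinj i hiN 0 (by omega) hij
        omega
    · have hiN' : i = N := le_antisymm hi hiN
      rw [hiN', hclosed] at hij
      rcases Nat.lt_or_ge j N with hjN | hjN
      · have := hinj 0 (by omega) j hjN hij
        omega
      · have : j = N := le_antisymm hj hjN
        omega
  refine ⟨(seqWalk X u N hadj).copy rfl hclosed, ?_, ?_, ?_⟩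
  · constructor
    · constructor
      · constructor
        rw [Walk.edges_copy, seqWalk_edges]
        rw [List.nodup_map_iff_inj_on (List.nodup_range (n := N))]
        intro i hi j hj hij
        simp only [List.mem_range] at hi hj
        rw [Sym2.eq_iff] at hij
        rcases hij with ⟨h1, h2⟩ | ⟨h1, h2⟩
        · exact hinj i hi j hj h1
        · rcases hinj' i (by omega) (j+1) (by omega) h1 with h | h | h
          · rcases hinj' (i+1) (by omega) j (by omega) h2 with h' | h' | h' <;> omega
          · rcases hinj' (i+1) (by omega) j (by omega) h2 with h' | h' | h' <;> omega
          · rcases hinj' (i+1) (by omega) j (by omega) h2 with h' | h' | h' <;> omega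
      · intro hnil
        have := seqWalk_length (X := X) u N hadj
        rw [← Walk.length_copy (seqWalk X u N hadj) rfl hclosed, hnil] at this
        simp at this
        omega
    · rw [Walk.support_copy, seqWalk_support]
      rw [List.range_succ_eq_map]
      simp only [List.map_cons, List.tail_cons, List.map_map]
      rw [List.nodup_map_iff_inj_on (List.nodup_range (n := N))]
      intro i hi j hj hij
      simp only [List.mem_range] at hi hj
      simp only [Function.comp_apply] at hij
      rcases hinj' (i+1) (by omega) (j+1) (by omega) hij with h | h | h <;> omega
  · rw [Walk.length_copy, seqWalk_length]
  · intro x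
    rw [Walk.support_copy, seqWalk_support]
    simp only [List.mem_map, List.mem_range]
    constructor
    · rintro ⟨i, hi, rfl⟩
      rcases Nat.lt_or_ge i N with h | h
      · exact ⟨i, h, rfl⟩
      · have : i = N := by omega
        subst this
        exact ⟨0, by omega, hclosed.symm⟩
    · rintro ⟨i, hi, rfl⟩
      exact ⟨i, by omega, rfl⟩

lemma support_eq_map_range {u v : V} (w : X.Walk u v) :
    w.support = (List.range (w.length + 1)).map w.getVert := by
  induction w with
  | nil => simp [Walk.getVert]
  | cons h q ih =>
    rw [Walk.support_cons, ih]
    conv_rhs => rw [Walk.length_cons, List.range_succ_eq_map, List.map_cons, List.map_map]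
    rfl

lemma edges_eq_map_range {u v : V} (w : X.Walk u v) :
    w.edges = (List.range w.length).map (fun i => s(w.getVert i, w.getVert (i + 1))) := by
  induction w with
  | nil => simp
  | cons h q ih =>
    rw [Walk.edges_cons, ih]
    conv_rhs => rw [Walk.length_cons, List.range_succ_eq_map, List.map_cons, List.map_map]
    congr 1
    simp [Walk.getVert_cons_succ, Walk.getVert_zero]

lemma exists_chain {V : Type*} (Q : ℕ → V → Prop) (R : ℕ → V → V → Prop) (a0 : V) (h0 : Q 0 a0)
    (hstep : ∀ i a, Q i a → ∃ b, Q (i + 1) b ∧ R i a b) :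
    ∃ v : ℕ → V, v 0 = a0 ∧ (∀ i, Q i (v i)) ∧ ∀ i, R i (v i) (v (i + 1)) := by
  choose g hg1 hg2 using hstep
  let w : ∀ i : ℕ, {a : V // Q i a} := fun i =>
    Nat.rec ⟨a0, h0⟩ (fun n x => ⟨g n x.1 x.2, hg1 n x.1 x.2⟩) i
  exact ⟨fun i => (w i).1, rfl, fun i => (w i).2, fun i => hg2 i (w i).1 (w i).2⟩

end MarusicAux

/-- Marušič's lifting lemma: for an `(m,p)`-semiregular automorphism `ρ = f` of `X`
(`p` prime) and a `k`-cycle `C` in the quotient graph, the subgraph of `X` induced by the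
union of the orbits in `C` either contains a cycle of length `kp`, or consists of `p`
disjoint `k`-cycles; in the latter case `d(S,S') = 1` for every edge `{S,S'}` of `C`. -/
theorem stmt_2 (V : Type*) [Fintype V] (X : SimpleGraph V) (f : Equiv.Perm V)
    (haut : ∀ u v : V, X.Adj (f u) (f v) ↔ X.Adj u v)
    (p m : ℕ) (hp : p.Prime)
    (hsemireg : ∀ v : V, Nat.card (MulAction.orbit (Subgroup.zpowers f) v) = p)
    (hm : Nat.card (Quotient (MulAction.orbitRel (Subgroup.zpowers f) V)) = m)
    (k : ℕ) (A : Quotient (MulAction.orbitRel (Subgroup.zpowers f) V))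
    (C : (orbitQuotientGraph X f).Walk A A) (hC : C.IsCycle) (hk : C.length = k) :
    (∃ (v : V) (w : X.Walk v v), w.IsCycle ∧ w.length = k * p ∧
        ∀ x ∈ w.support, orbitProj f x ∈ C.support) ∨
    ((∃ (vs : Fin p → V) (ws : ∀ i, X.Walk (vs i) (vs i)),
        (∀ i, (ws i).IsCycle ∧ (ws i).length = k ∧
          ∀ x ∈ (ws i).support, orbitProj f x ∈ C.support) ∧
        (∀ i j, i ≠ j → List.Disjoint (ws i).support (ws j).support) ∧
        (∀ x : V, orbitProj f x ∈ C.support → ∃ i, x ∈ (ws i).support)) ∧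
      ∀ S S' : Quotient (MulAction.orbitRel (Subgroup.zpowers f) V),
        s(S, S') ∈ C.edges → ∀ a : V, orbitProj f a = S →
          ∃! b : V, orbitProj f b = S' ∧ X.Adj a b) := by
  classical
  have hp2 : 2 ≤ p := hp.two_le
  have hk3 : 3 ≤ k := hk ▸ hC.three_le_length
  -- period of every vertex is exactly p
  have hper : ∀ (x : V) (n : ℤ), (f ^ n) x = x ↔ (p : ℤ) ∣ n := by
    intro x n
    have hmp : Function.minimalPeriod (f • ·) x = p := by
      haveI : Fintype (MulAction.orbit (Subgroup.zpowers f) x) := Fintype.ofFinite _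
      rw [MulAction.minimalPeriod_eq_card, ← Nat.card_eq_fintype_card]
      exact hsemireg x
    have h2 := MulAction.zpow_smul_eq_iff_minimalPeriod_dvd (a := f) (b := x) (n := n)
    rw [hmp] at h2
    simpa [Equiv.Perm.smul_def] using h2
  -- all integer powers of f preserve adjacency
  have hautz : ∀ (n : ℤ) (a b : V), X.Adj ((f ^ n) a) ((f ^ n) b) ↔ X.Adj a b := by
    have hinv : ∀ a b : V, X.Adj (f⁻¹ a) (f⁻¹ b) ↔ X.Adj a b := by
      intro a b
      conv_rhs => rw [← (show f (f⁻¹ a) = a from f.apply_symm_apply a), ← (show f (f⁻¹ b) = b from f.apply_symm_apply b), haut]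
    intro n
    induction n using Int.induction_on with
    | zero => simp
    | succ n ih =>
      intro a b
      rw [zpow_add, zpow_one, Equiv.Perm.mul_apply, Equiv.Perm.mul_apply, ih, haut]
    | pred n ih =>
      intro a b
      rw [zpow_sub, zpow_one, Equiv.Perm.mul_apply, Equiv.Perm.mul_apply, ih, hinv]
  have horb : ∀ (n : ℤ) (x : V), orbitProj f ((f ^ n) x) = orbitProj f x := by
    intro n x
    apply Quotient.sound
    exact ⟨⟨f ^ n, Subgroup.mem_zpowers_iff.mpr ⟨n, rfl⟩⟩, rfl⟩
  have hreach : ∀ x y : V, orbitProj f x = orbitProj f y → ∃ n : ℤ, (f ^ n) y = x := by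
    intro x y h
    obtain ⟨⟨g, hg⟩, hgx⟩ := Quotient.exact h
    obtain ⟨n, hn⟩ := Subgroup.mem_zpowers_iff.mp hg
    exact ⟨n, by rw [hn]; exact hgx⟩
  have hcomp : ∀ (a b : ℤ) (x : V), (f ^ (a + b)) x = (f ^ a) ((f ^ b) x) := by
    intro a b x; rw [zpow_add, Equiv.Perm.mul_apply]
  have hgvA : C.getVert k = A := by rw [← hk]; exact C.getVert_length
  -- injectivity of getVert on [0,k)
  have hSinj1 : ∀ i < k, ∀ j < k, C.getVert (i + 1) = C.getVert (j + 1) → i = j := by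
    have hnd := hC.support_nodup
    rw [MarusicAux.support_eq_map_range, hk, List.range_succ_eq_map, List.map_cons,
      List.map_map, List.tail_cons] at hnd
    intro i hi j hj hij
    exact List.inj_on_of_nodup_map hnd (List.mem_range.mpr hi) (List.mem_range.mpr hj)
      (by simpa [Function.comp] using hij)
  have hgv : ∀ i, i ≤ k → i ≠ 0 → ∀ j, j ≤ k → j ≠ 0 → C.getVert i = C.getVert j → i = j := by
    intro i hi hi0 j hj hj0 hij
    have := hSinj1 (i - 1) (by omega) (j - 1) (by omega)
      (by rw [show i - 1 + 1 = i by omega, show j - 1 + 1 = j by omega]; exact hij)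
    omega
  have hgvk0 : C.getVert k = C.getVert 0 := by rw [C.getVert_zero, hgvA]
  have hSinj : ∀ i < k, ∀ j < k, C.getVert i = C.getVert j → i = j := by
    intro i hi j hj hij
    by_cases hi0 : i = 0
    · by_cases hj0 : j = 0
      · omega
      · subst hi0
        have : C.getVert k = C.getVert j := by rw [hgvk0]; exact hij
        have := hgv k le_rfl (by omega) j (by omega) hj0 this
        omega
    · by_cases hj0 : j = 0
      · subst hj0
        have : C.getVert i = C.getVert k := by rw [hgvk0]; exact hij
        have := hgv i (by omega) hi0 k le_rfl (by omega) this
        omega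
      · exact hgv i (by omega) hi0 j (by omega) hj0 hij
  have hmemS : ∀ i ≤ k, C.getVert i ∈ C.support := by
    intro i hi
    rw [SimpleGraph.Walk.mem_support_iff_exists_getVert]
    exact ⟨i, rfl, by omega⟩
  have hCadj : ∀ i, i < k → (orbitQuotientGraph X f).Adj (C.getVert i) (C.getVert (i + 1)) := by
    intro i hi
    exact C.adj_getVert_succ (by rw [hk]; exact hi)
  -- neighbor existence in both directions
  have hnbrF : ∀ i < k, ∀ a : V, orbitProj f a = C.getVert i →
      ∃ b, orbitProj f b = C.getVert (i + 1) ∧ X.Adj a b := by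
    intro i hi a ha
    obtain ⟨-, a0, b0, ha0, hb0, hab⟩ := hCadj i hi
    obtain ⟨n, hn⟩ := hreach a a0 (by rw [ha, ha0])
    refine ⟨(f ^ n) b0, by rw [horb]; exact hb0, ?_⟩
    rw [← hn, hautz]; exact hab
  have hnbrB : ∀ i < k, ∀ b : V, orbitProj f b = C.getVert (i + 1) →
      ∃ a, orbitProj f a = C.getVert i ∧ X.Adj a b := by
    intro i hi b hb
    obtain ⟨-, a0, b0, ha0, hb0, hab⟩ := hCadj i hi
    obtain ⟨n, hn⟩ := hreach b b0 (by rw [hb, hb0])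
    refine ⟨(f ^ n) a0, by rw [horb]; exact ha0, ?_⟩
    rw [← hn, hautz]; exact hab
  -- construct a lift
  obtain ⟨a0, ha0⟩ := Quotient.exists_rep A
  obtain ⟨v, hv0, hvQ, hvR⟩ := MarusicAux.exists_chain
    (fun i a => i ≤ k → orbitProj f a = C.getVert i)
    (fun i a b => i < k → X.Adj a b) a0
    (fun _ => by rw [C.getVert_zero]; exact ha0)
    (by
      intro i a hQ
      by_cases hik : i < k
      · obtain ⟨b, hb1, hb2⟩ := hnbrF i hik a (hQ (le_of_lt hik))
        exact ⟨b, fun _ => hb1, fun _ => hb2⟩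
      · exact ⟨a, fun h => absurd h (by omega), fun h => absurd h hik⟩)
  have hvS : ∀ i ≤ k, orbitProj f (v i) = C.getVert i := fun i hi => hvQ i hi
  have hvadj : ∀ i < k, X.Adj (v i) (v (i + 1)) := fun i hi => hvR i hi
  obtain ⟨r, hr⟩ := hreach (v k) (v 0)
    (by rw [hvS k le_rfl, hvS 0 (by omega), C.getVert_zero, hgvA])
  -- the big-cycle construction from a lift with nonzero twist
  have bigcycle : ∀ (vv : ℕ → V) (t : ℤ),
      (∀ i ≤ k, orbitProj f (vv i) = C.getVert i) →
      (∀ i < k, X.Adj (vv i) (vv (i + 1))) →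
      ((f ^ t) (vv 0) = vv k) → ¬ ((p : ℤ) ∣ t) →
      ∃ (v0 : V) (w : X.Walk v0 v0), w.IsCycle ∧ w.length = k * p ∧
        ∀ x ∈ w.support, orbitProj f x ∈ C.support := by
    intro vv t hvvS hvvadj ht hpt
    have hk0 : 0 < k := by omega
    set u : ℕ → V := fun n => (f ^ (((n / k : ℕ) : ℤ) * t)) (vv (n % k)) with hu
    have hqi : ∀ n, u n = (f ^ (((n / k : ℕ) : ℤ) * t)) (vv (n % k)) := fun _ => rfl
    have hdm : ∀ q i : ℕ, i < k → (i + k * q) / k = q ∧ (i + k * q) % k = i := by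
      intro q i hi
      refine ⟨?_, ?_⟩
      · rw [Nat.add_mul_div_left _ _ hk0, Nat.div_eq_of_lt hi, Nat.zero_add]
      · rw [Nat.add_mul_mod_self_left, Nat.mod_eq_of_lt hi]
    have hadj : ∀ n < k * p, X.Adj (u n) (u (n + 1)) := by
      intro n hn
      have hiq := Nat.mod_add_div n k
      have hik : n % k < k := Nat.mod_lt _ hk0
      by_cases hc : n % k + 1 < k
      · have hstep : n + 1 = (n % k + 1) + k * (n / k) := by omega
        have e1 : u (n + 1) = (f ^ (((n / k : ℕ) : ℤ) * t)) (vv (n % k + 1)) := by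
          rw [hqi (n + 1), hstep, (hdm (n / k) (n % k + 1) hc).1, (hdm (n / k) (n % k + 1) hc).2]
        rw [hqi n, e1, hautz]
        exact hvvadj _ (by omega)
      · have hik1 : n % k + 1 = k := by omega
        have hstep : n + 1 = 0 + k * (n / k + 1) := by
          have : k * (n / k + 1) = k * (n / k) + k := by ring
          omega
        have e1 : u (n + 1) = (f ^ (((n / k : ℕ) : ℤ) * t)) (vv k) := by
          rw [hqi (n + 1), hstep, (hdm (n / k + 1) 0 hk0).1, (hdm (n / k + 1) 0 hk0).2]
          rw [show ((n / k + 1 : ℕ) : ℤ) * t = ((n / k : ℕ) : ℤ) * t + t by push_cast; ring,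
            hcomp, ht]
        rw [hqi n, e1, hautz]
        have := hvvadj (n % k) (by omega)
        rwa [hik1] at this
    have hclosed : u (k * p) = u 0 := by
      have hstep : k * p = 0 + k * p := by omega
      have e1 : u (k * p) = (f ^ ((p : ℤ) * t)) (vv 0) := by
        rw [hqi (k * p), hstep, (hdm p 0 hk0).1, (hdm p 0 hk0).2]
      have e0 : u 0 = vv 0 := by
        rw [hqi 0, Nat.zero_div, Nat.zero_mod]
        norm_num
      rw [e1, e0, (hper (vv 0) ((p : ℤ) * t)).mpr ⟨t, rfl⟩]
    have hinj : ∀ n < k * p, ∀ n' < k * p, u n = u n' → n = n' := by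
      intro n hn n' hn' he
      have hiq := Nat.mod_add_div n k
      have hiq' := Nat.mod_add_div n' k
      have hik : n % k < k := Nat.mod_lt _ hk0
      have hik' : n' % k < k := Nat.mod_lt _ hk0
      have ho : C.getVert (n % k) = C.getVert (n' % k) := by
        rw [← hvvS (n % k) (by omega), ← hvvS (n' % k) (by omega),
          ← horb (((n / k : ℕ) : ℤ) * t) (vv (n % k)),
          ← horb (((n' / k : ℕ) : ℤ) * t) (vv (n' % k)), ← hqi n, ← hqi n', he]
      have hmm : n % k = n' % k := hSinj _ hik _ hik' ho
      have hqlt : n / k < p := Nat.div_lt_of_lt_mul hn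
      have hqlt' : n' / k < p := Nat.div_lt_of_lt_mul hn'
      have he2 : (f ^ (((n / k : ℕ) : ℤ) * t)) (vv (n % k))
          = (f ^ (((n' / k : ℕ) : ℤ) * t)) (vv (n % k)) := by
        rw [← hqi n]
        conv_rhs => rw [hmm, ← hqi n']
        exact he
      have he3 : (f ^ (((n / k : ℕ) : ℤ) * t - ((n' / k : ℕ) : ℤ) * t)) (vv (n % k))
          = vv (n % k) := by
        apply (f ^ (((n' / k : ℕ) : ℤ) * t)).injective
        rw [← hcomp, show ((n' / k : ℕ) : ℤ) * t + (((n / k : ℕ) : ℤ) * t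
          - ((n' / k : ℕ) : ℤ) * t) = ((n / k : ℕ) : ℤ) * t by ring]
        exact he2
      have hdvd := (hper _ _).mp he3
      rw [show ((n / k : ℕ) : ℤ) * t - ((n' / k : ℕ) : ℤ) * t
        = (((n / k : ℕ) : ℤ) - ((n' / k : ℕ) : ℤ)) * t by ring] at hdvd
      have hpp : Prime ((p : ℤ)) := Nat.prime_iff_prime_int.mp hp
      rcases hpp.dvd_mul.mp hdvd with h | h
      · have h0 : (((n / k : ℕ) : ℤ) - ((n' / k : ℕ) : ℤ)) = 0 := by
          refine Int.eq_zero_of_abs_lt_dvd h ?_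
          have ha : ((n / k : ℕ) : ℤ) < (p : ℤ) := by exact_mod_cast hqlt
          have hb : ((n' / k : ℕ) : ℤ) < (p : ℤ) := by exact_mod_cast hqlt'
          have ha0 : (0 : ℤ) ≤ ((n / k : ℕ) : ℤ) := Int.natCast_nonneg _
          have hb0 : (0 : ℤ) ≤ ((n' / k : ℕ) : ℤ) := Int.natCast_nonneg _
          rw [abs_lt]
          constructor <;> linarith
        have hdiv : n / k = n' / k := by exact_mod_cast sub_eq_zero.mp h0
        rw [← hiq, ← hiq', hmm, hdiv]
      · exact absurd h hpt
    obtain ⟨w, hw1, hw2, hw3⟩ := MarusicAux.cycle_of_seq X u (k * p)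
      (le_trans hk3 (Nat.le_mul_of_pos_right k (by omega))) hadj hclosed hinj
    refine ⟨u 0, w, hw1, hw2, ?_⟩
    intro x hx
    obtain ⟨i, hi, rfl⟩ := (hw3 x).mp hx
    have : orbitProj f (u i) = C.getVert (i % k) := by
      rw [hqi, horb]
      exact hvvS _ (Nat.mod_lt _ hk0).le
    rw [this]
    exact hmemS _ (Nat.mod_lt _ hk0).le
  -- main case analysis
  by_cases hpr : (p : ℤ) ∣ r
  · -- the lift closes up
    have hvk : v k = v 0 := by rw [← hr, (hper (v 0) r).mpr hpr]
    by_cases HD : ∀ i < k, ∀ a b b' : V, orbitProj f a = C.getVert i →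
        orbitProj f b = C.getVert (i + 1) → orbitProj f b' = C.getVert (i + 1) →
        X.Adj a b → X.Adj a b' → b = b'
    · -- valency one everywhere: p disjoint k-cycles
      right
      constructor
      · have hW : ∀ j : Fin p, ∃ w : X.Walk ((f ^ ((j : ℕ) : ℤ)) (v 0))
            ((f ^ ((j : ℕ) : ℤ)) (v 0)),
            w.IsCycle ∧ w.length = k ∧
              ∀ x, x ∈ w.support ↔ ∃ i < k, (f ^ ((j : ℕ) : ℤ)) (v i) = x := by
          intro j
          exact MarusicAux.cycle_of_seq X (fun n => (f ^ ((j : ℕ) : ℤ)) (v n)) k hk3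
            (fun i hi => (hautz _ _ _).mpr (hvadj i hi))
            (by simp only [hvk])
            (fun i hi i' hi' he => hSinj i hi i' hi' (by
              have h2 := (f ^ ((j : ℕ) : ℤ)).injective he
              rw [← hvS i (by omega), ← hvS i' (by omega), h2]))
        choose ws hws1 hws2 hws3 using hW
        refine ⟨fun j => (f ^ ((j : ℕ) : ℤ)) (v 0), ws, fun j => ⟨hws1 j, hws2 j, ?_⟩, ?_, ?_⟩
        · intro x hx
          obtain ⟨i, hi, rfl⟩ := (hws3 j x).mp hx
          rw [horb, hvS i (by omega)]
          exact hmemS i (by omega)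
        · intro j1 j2 hne x hx1 hx2
          obtain ⟨i1, hi1, he1⟩ := (hws3 j1 x).mp hx1
          obtain ⟨i2, hi2, he2⟩ := (hws3 j2 x).mp hx2
          have hoo : C.getVert i1 = C.getVert i2 := by
            rw [← hvS i1 (by omega), ← hvS i2 (by omega),
              ← horb ((j1 : ℕ) : ℤ) (v i1), ← horb ((j2 : ℕ) : ℤ) (v i2), he1, he2]
          have hii : i1 = i2 := hSinj i1 hi1 i2 hi2 hoo
          subst hii
          have he3 : (f ^ (((j1 : ℕ) : ℤ) - ((j2 : ℕ) : ℤ))) (v i1) = v i1 := by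
            apply (f ^ ((j2 : ℕ) : ℤ)).injective
            rw [← hcomp, show ((j2 : ℕ) : ℤ) + (((j1 : ℕ) : ℤ) - ((j2 : ℕ) : ℤ))
              = ((j1 : ℕ) : ℤ) by ring, he1, he2]
          have hdvd := (hper _ _).mp he3
          have h0 : (((j1 : ℕ) : ℤ) - ((j2 : ℕ) : ℤ)) = 0 := by
            refine Int.eq_zero_of_abs_lt_dvd hdvd ?_
            have ha : (((j1 : ℕ)) : ℤ) < (p : ℤ) := by exact_mod_cast j1.isLt
            have hb : (((j2 : ℕ)) : ℤ) < (p : ℤ) := by exact_mod_cast j2.isLt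
            have ha0 : (0 : ℤ) ≤ (((j1 : ℕ)) : ℤ) := Int.natCast_nonneg _
            have hb0 : (0 : ℤ) ≤ (((j2 : ℕ)) : ℤ) := Int.natCast_nonneg _
            rw [abs_lt]
            constructor <;> linarith
          have : (j1 : ℕ) = (j2 : ℕ) := by
            have := sub_eq_zero.mp h0
            exact_mod_cast this
          exact hne (Fin.ext this)
        · intro x hx
          rw [SimpleGraph.Walk.mem_support_iff_exists_getVert] at hx
          obtain ⟨n, hn, hnk⟩ := hx
          rw [hk] at hnk
          have hik : ∃ i < k, C.getVert i = orbitProj f x := by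
            by_cases h : n = k
            · subst h
              exact ⟨0, by omega, by rw [← hgvk0]; exact hn⟩
            · exact ⟨n, by omega, hn⟩
          obtain ⟨i, hiik, hio⟩ := hik
          obtain ⟨nn, hnn⟩ := hreach x (v i) (by rw [hvS i (by omega), hio])
          have hp0 : (0 : ℤ) < (p : ℤ) := by exact_mod_cast hp.pos
          have hj0 : 0 ≤ nn % (p : ℤ) := Int.emod_nonneg nn (by omega)
          have hjp : nn % (p : ℤ) < (p : ℤ) := Int.emod_lt_of_pos nn hp0
          have hsplit : (f ^ nn) (v i) = (f ^ (nn % (p : ℤ))) (v i) := by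
            conv_lhs => rw [show nn = nn % (p : ℤ) + (p : ℤ) * (nn / (p : ℤ)) from
              (Int.emod_add_mul_ediv nn (p : ℤ)).symm]
            rw [hcomp]
            congr 1
            exact (hper _ _).mpr ⟨nn / (p : ℤ), rfl⟩
          refine ⟨⟨(nn % (p : ℤ)).toNat, by omega⟩, ?_⟩
          rw [hws3]
          refine ⟨i, hiik, ?_⟩
          show (f ^ (((nn % (p : ℤ)).toNat : ℕ) : ℤ)) (v i) = x
          rw [Int.toNat_of_nonneg hj0, ← hsplit]
          exact hnn
      · -- d(S,S') = 1 on edges of C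
        intro S1 S2 hedge a ha
        have hedge' : ∃ i < k, s(S1, S2) = s(C.getVert i, C.getVert (i + 1)) := by
          rw [MarusicAux.edges_eq_map_range] at hedge
          simp only [List.mem_map, List.mem_range] at hedge
          obtain ⟨i, hi, he⟩ := hedge
          rw [hk] at hi
          exact ⟨i, hi, he.symm⟩
        obtain ⟨i, hik, he⟩ := hedge'
        rw [Sym2.eq_iff] at he
        have hBuniq : ∀ b a1 a2 : V, orbitProj f b = C.getVert (i + 1) →
            orbitProj f a1 = C.getVert i → orbitProj f a2 = C.getVert i →
            X.Adj b a1 → X.Adj b a2 → a1 = a2 := by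
          intro b a1 a2 hb ha1 ha2 hba1 hba2
          obtain ⟨s, hs⟩ := hreach a2 a1 (by rw [ha1, ha2])
          have h1 : X.Adj a1 ((f ^ (-s)) b) := by
            have h2 : X.Adj ((f ^ (-s)) a2) ((f ^ (-s)) b) := (hautz _ _ _).mpr hba2.symm
            rw [← hs, ← hcomp] at h2
            simpa using h2
          have h2 := HD i hik a1 b ((f ^ (-s)) b) ha1 hb (by rw [horb]; exact hb) hba1.symm h1
          have h3 := (hper b (-s)).mp h2.symm
          have hps : (p : ℤ) ∣ s := (dvd_neg).mp h3
          rw [← hs, (hper a1 s).mpr hps]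
        rcases he with ⟨he1, he2⟩ | ⟨he1, he2⟩
        · obtain ⟨b, hb1, hb2⟩ := hnbrF i hik a (by rw [← he1]; exact ha)
          refine ⟨b, ⟨by rw [he2]; exact hb1, hb2⟩, ?_⟩
          rintro b' ⟨hb1', hb2'⟩
          exact HD i hik a b' b (by rw [← he1]; exact ha)
            (by rw [← he2]; exact hb1') hb1 hb2' hb2
        · obtain ⟨b, hb1, hb2⟩ := hnbrB i hik a (by rw [← he1]; exact ha)
          refine ⟨b, ⟨by rw [he2]; exact hb1, hb2.symm⟩, ?_⟩
          rintro b' ⟨hb1', hb2'⟩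
          exact hBuniq a b' b (by rw [← he1]; exact ha)
            (by rw [← he2]; exact hb1') hb1 hb2' hb2.symm
    · -- some valency is at least 2: retwist the lift
      left
      push_neg at HD
      obtain ⟨i0, hi0k, a, b, b', ha, hb, hb', hab, hab', hbb'⟩ := HD
      obtain ⟨n, hn⟩ := hreach (v i0) a (by rw [hvS i0 (le_of_lt hi0k), ha])
      have hc : X.Adj (v i0) ((f ^ n) b) := by
        rw [← hn]; exact (hautz _ _ _).mpr hab
      have hc' : X.Adj (v i0) ((f ^ n) b') := by
        rw [← hn]; exact (hautz _ _ _).mpr hab'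
      have hcorb : orbitProj f ((f ^ n) b) = C.getVert (i0 + 1) := by rw [horb]; exact hb
      have hcorb' : orbitProj f ((f ^ n) b') = C.getVert (i0 + 1) := by rw [horb]; exact hb'
      have hcc' : (f ^ n) b ≠ (f ^ n) b' := fun h => hbb' ((f ^ n).injective h)
      obtain ⟨d, hd_adj, hd_orb, hd_ne⟩ :
          ∃ d, X.Adj (v i0) d ∧ orbitProj f d = C.getVert (i0 + 1) ∧ d ≠ v (i0 + 1) := by
        by_cases h : (f ^ n) b = v (i0 + 1)
        · exact ⟨(f ^ n) b', hc', hcorb', by rw [← h]; exact hcc'.symm⟩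
        · exact ⟨(f ^ n) b, hc, hcorb, h⟩
      obtain ⟨s, hs⟩ := hreach d (v (i0 + 1)) (by rw [hvS (i0 + 1) (by omega), hd_orb])
      have hps : ¬ (p : ℤ) ∣ s := fun hdvd => hd_ne (by rw [← hs, (hper _ _).mpr hdvd])
      set v' : ℕ → V := fun nn => if nn ≤ i0 then v nn else (f ^ s) (v nn) with hv'
      have hv'eq1 : ∀ nn, nn ≤ i0 → v' nn = v nn := fun nn h => if_pos h
      have hv'eq2 : ∀ nn, i0 < nn → v' nn = (f ^ s) (v nn) := fun nn h => if_neg (by omega)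
      have hv'S : ∀ i ≤ k, orbitProj f (v' i) = C.getVert i := by
        intro i hi
        by_cases h : i ≤ i0
        · rw [hv'eq1 i h]; exact hvS i hi
        · rw [hv'eq2 i (by omega), horb]; exact hvS i hi
      have hv'adj : ∀ i < k, X.Adj (v' i) (v' (i + 1)) := by
        intro i hik2
        rcases lt_trichotomy i i0 with h | h | h
        · rw [hv'eq1 i (by omega), hv'eq1 (i + 1) (by omega)]
          exact hvadj i hik2
        · subst h
          rw [hv'eq1 i le_rfl, hv'eq2 (i + 1) (by omega), hs]
          exact hd_adj
        · rw [hv'eq2 i (by omega), hv'eq2 (i + 1) (by omega)]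
          exact (hautz _ _ _).mpr (hvadj i hik2)
      have ht' : (f ^ s) (v' 0) = v' k := by
        rw [hv'eq1 0 (by omega), hv'eq2 k (by omega), hvk]
      exact bigcycle v' s hv'S hv'adj ht' hps
  · -- nonzero twist: one big cycle
    left
    exact bigcycle v r hvS hvadj hr hpr
end

section
/- Let T be a finite group with a subgroup H of index t, let D = HgH ∪ Hg⁻¹H for some g ∈ T \ H, and suppose the coset graph X = X(T, H, D) has a Hamilton cycle. Let G = T × ⟨c⟩ where c has prime order p with gcd(t, p) = 1. Then the coset graph Y₁ = X(G, H, Dc ∪ Dc⁻¹) has a Hamilton cycle. -/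
open Pointwise

/-- The coset graph `X(G, H, D)` on the right cosets of `H` in `G`:
`Hx ∼ Hy` iff the cosets are distinct and `y * x⁻¹ ∈ D` (symmetrized). -/
def cosetGraph (G : Type*) [Group G] (H : Subgroup G) (D : Set G) :
    SimpleGraph (Quotient (QuotientGroup.rightRel H)) where
  Adj A B := A ≠ B ∧ ∃ x y : G, Quotient.mk _ x = A ∧ Quotient.mk _ y = B ∧
      (y * x⁻¹ ∈ D ∨ x * y⁻¹ ∈ D)
  symm := ⟨by
    rintro A B ⟨hne, x, y, hx, hy, h⟩
    exact ⟨hne.symm, y, x, hy, hx, h.symm⟩⟩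
  loopless := ⟨by rintro A ⟨hne, _⟩; exact hne rfl⟩

/-- A graph has a Hamilton cycle. -/
def HasHamiltonCycle {V : Type*} (X : SimpleGraph V) : Prop :=
  letI := Classical.decEq V
  ∃ (v : V) (w : X.Walk v v), w.IsHamiltonianCycle

open SimpleGraph in
def walkOfFn {V : Type*} (G : SimpleGraph V) (f : ℕ → V)
    (hf : ∀ k, G.Adj (f k) (f (k + 1))) : (n : ℕ) → G.Walk (f 0) (f n)
  | 0 => .nil
  | n + 1 => (walkOfFn G f hf n).concat (hf n)

section aux
open SimpleGraph

lemma walkOfFn_support {V : Type*} (G : SimpleGraph V) (f : ℕ → V)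
    (hf : ∀ k, G.Adj (f k) (f (k + 1))) (n : ℕ) :
    (walkOfFn G f hf n).support = (List.range (n + 1)).map f := by
  induction n with
  | zero => simp [walkOfFn, List.range_succ]
  | succ n ih =>
    rw [walkOfFn, Walk.support_concat, ih, List.range_succ (n := n + 1)]
    simp

lemma walkOfFn_edges {V : Type*} (G : SimpleGraph V) (f : ℕ → V)
    (hf : ∀ k, G.Adj (f k) (f (k + 1))) (n : ℕ) :
    (walkOfFn G f hf n).edges = (List.range n).map (fun k => s(f k, f (k + 1))) := by
  induction n with
  | zero => simp [walkOfFn]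
  | succ n ih =>
    rw [walkOfFn, Walk.edges_concat, ih, List.range_succ]
    simp

lemma walkOfFn_length {V : Type*} (G : SimpleGraph V) (f : ℕ → V)
    (hf : ∀ k, G.Adj (f k) (f (k + 1))) (n : ℕ) :
    (walkOfFn G f hf n).length = n := by
  induction n with
  | zero => rfl
  | succ n ih => rw [walkOfFn, Walk.length_concat, ih]

lemma hasHamiltonCycle_of_fn {V : Type*} (G : SimpleGraph V) (f : ℕ → V) (n : ℕ)
    (hn : 3 ≤ n) (hadj : ∀ k, G.Adj (f k) (f (k + 1))) (hper : f n = f 0)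
    (hinj : ∀ i < n, ∀ j < n, f i = f j → i = j)
    (hsurj : ∀ v, ∃ i < n, f i = v) :
    HasHamiltonCycle G := by
  classical
  have hinj' : ∀ i ≤ n, ∀ j ≤ n, 0 < i → 0 < j → f i = f j → i = j := by
    intro i hi j hj hi0 hj0 hij
    rcases eq_or_lt_of_le hi with rfl | hi
    · rcases eq_or_lt_of_le hj with rfl | hj
      · rfl
      · have := hinj 0 (by omega) j hj (hper.symm.trans hij); omega
    · rcases eq_or_lt_of_le hj with rfl | hj
      · have := hinj 0 (by omega) i hi (hper.symm.trans hij.symm); omega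
      · exact hinj i hi j hj hij
  refine ⟨f 0, (walkOfFn G f hadj n).copy rfl hper, ?_⟩
  rw [Walk.isHamiltonianCycle_iff_isCycle_and_support_count_tail_eq_one]
  have hsupp : ((walkOfFn G f hadj n).copy rfl hper).support
      = (List.range (n + 1)).map f := by
    rw [Walk.support_copy, walkOfFn_support]
  have htail : ((walkOfFn G f hadj n).copy rfl hper).support.tail
      = (List.range n).map (fun k => f (k + 1)) := by
    rw [hsupp, List.range_succ_eq_map]
    simp [Function.comp]
  constructor
  · constructor
    constructor
    constructor
    · rw [Walk.edges_copy, walkOfFn_edges]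
      refine (List.nodup_range : (List.range n).Nodup).map_on ?_
      intro i hi j hj hij
      simp only [List.mem_range] at hi hj
      rw [Sym2.eq_iff] at hij
      rcases hij with ⟨h1, h2⟩ | ⟨h1, h2⟩
      · exact hinj i hi j hj h1
      · rcases Nat.eq_zero_or_pos i with rfl | hi0
        · have hj1 : j + 1 = n := by
            by_contra h
            have := hinj 0 (by omega) (j + 1) (by omega) h1
            omega
          have : 1 = j := hinj' 1 (by omega) j (by omega) (by omega) (by omega) h2
          omega
        · have : i = j + 1 := hinj' i (by omega) (j + 1) (by omega) hi0 (by omega) h1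
          subst this
          rcases Nat.eq_zero_or_pos j with rfl | hj0
          · have : 2 = n := hinj' 2 (by omega) n (by omega) (by omega) (by omega)
              (h2.trans hper.symm)
            omega
          · have : j + 2 = j := hinj' (j + 2) (by omega) j (by omega) (by omega) hj0 h2
            omega
    · intro h
      have := congrArg Walk.length h
      rw [Walk.length_copy, walkOfFn_length] at this
      simp at this
      omega
    · rw [htail]
      refine (List.nodup_range : (List.range n).Nodup).map_on ?_
      intro i hi j hj hij
      simp only [List.mem_range] at hi hj
      have := hinj' (i + 1) (by omega) (j + 1) (by omega) (by omega) (by omega) hij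
      omega
  · intro a
    rw [htail]
    have hnd : ((List.range n).map (fun k => f (k + 1))).Nodup := by
      refine (List.nodup_range : (List.range n).Nodup).map_on ?_
      intro i hi j hj hij
      simp only [List.mem_range] at hi hj
      have := hinj' (i + 1) (by omega) (j + 1) (by omega) (by omega) (by omega) hij
      omega
    have hmem : a ∈ (List.range n).map (fun k => f (k + 1)) := by
      obtain ⟨i, hi, rfl⟩ := hsurj a
      rcases Nat.eq_zero_or_pos i with rfl | hi0
      · refine List.mem_map.2 ⟨n - 1, List.mem_range.2 (by omega), ?_⟩
        rw [show n - 1 + 1 = n by omega, hper]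
      · exact List.mem_map.2 ⟨i - 1, List.mem_range.2 (by omega), by
          rw [show i - 1 + 1 = i by omega]⟩
    exact List.count_eq_one_of_mem hnd hmem


lemma walk_support_eq {V : Type*} {G : SimpleGraph V} {u v : V} (p : G.Walk u v) :
    p.support = (List.range (p.length + 1)).map p.getVert := by
  induction p with
  | nil => simp [List.range_succ]
  | cons h q ih =>
    have hcomp : (SimpleGraph.Walk.cons h q).getVert ∘ Nat.succ = q.getVert := by
      funext i
      simp [SimpleGraph.Walk.getVert_cons_succ, Nat.succ_eq_add_one]
    rw [SimpleGraph.Walk.support_cons, SimpleGraph.Walk.length_cons,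
      List.range_succ_eq_map, List.map_cons, List.map_map, hcomp, ← ih,
      SimpleGraph.Walk.getVert_zero]

end aux

open SimpleGraph

theorem stmt_3 (T : Type*) [Group T] [Fintype T] (H : Subgroup T) (g : T) (hg : g ∉ H)
    (D : Set T) (hD : D = (H : Set T) * {g} * (H : Set T) ∪ (H : Set T) * {g⁻¹} * (H : Set T))
    (hX : HasHamiltonCycle (cosetGraph T H D))
    (C : Type*) [Group C] (c : C) (hC : ∀ x : C, x ∈ Subgroup.zpowers c)
    (p : ℕ) (hp : p.Prime) (hc : orderOf c = p)
    (hcop : Nat.gcd H.index p = 1) :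
    HasHamiltonCycle (cosetGraph (T × C) (H.prod ⊥)
      ((fun x => (x, c)) '' D ∪ (fun x => (x, c⁻¹)) '' D)) := by
  classical
  -- D is symmetric
  have hDsymm : ∀ z ∈ D, z⁻¹ ∈ D := by
    have key : ∀ (a : T) z, z ∈ (H : Set T) * {a} * (H : Set T) →
        z⁻¹ ∈ (H : Set T) * {a⁻¹} * (H : Set T) := by
      intro a z hz
      rw [Set.mem_mul] at hz
      obtain ⟨u, hu, b, hb, rfl⟩ := hz
      rw [Set.mem_mul] at hu
      obtain ⟨h, hh, y, hy, rfl⟩ := hu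
      rw [Set.mem_singleton_iff] at hy
      subst hy
      simp only [mul_inv_rev, ← mul_assoc]
      exact Set.mul_mem_mul (Set.mul_mem_mul (H.inv_mem hb) rfl) (H.inv_mem hh)
    rw [hD]
    rintro z (hz | hz)
    · exact Or.inr (key g z hz)
    · refine Or.inl ?_
      have := key g⁻¹ z hz
      rwa [inv_inv] at this
  letI : DecidableEq (Quotient (QuotientGroup.rightRel H)) := Classical.decEq _
  letI : DecidableEq (Quotient (QuotientGroup.rightRel (H.prod (⊥ : Subgroup C)))) :=
    Classical.decEq _
  obtain ⟨v, w, hw⟩ := hX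
  set t := w.length with ht
  have ht3 : 3 ≤ t := hw.isCycle.three_le_length
  have htpos : 0 < t := by omega
  -- t = index of H
  letI : Fintype (Quotient (QuotientGroup.rightRel H)) := Fintype.ofFinite _
  have ht_eq : t = H.index := by
    rw [ht, hw.length_eq, ← Nat.card_eq_fintype_card, Subgroup.index_eq_card]
    exact Nat.card_congr (QuotientGroup.quotientRightRelEquivQuotientLeftRel H)
  have cop : Nat.Coprime t p := by rw [Nat.Coprime, ht_eq]; exact hcop
  have hp2 : 2 ≤ p := hp.two_le
  have hc1 : c ≠ 1 := by
    intro h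
    rw [h, orderOf_one] at hc
    omega
  -- support of w as getVert
  have hsupport : w.support = (List.range (t + 1)).map w.getVert := walk_support_eq w
  have hv0t : w.getVert t = w.getVert 0 := by
    rw [SimpleGraph.Walk.getVert_zero]
    exact SimpleGraph.Walk.getVert_length w
  have hgetinj : ∀ i < t, ∀ j < t, w.getVert i = w.getVert j → i = j := by
    have hnd : w.support.tail.Nodup := hw.isCycle.support_nodup
    rw [hsupport, List.range_succ_eq_map] at hnd
    simp only [List.map_cons, List.tail_cons, List.map_map] at hnd
    have hinj : ∀ i < t, ∀ j < t, w.getVert (i + 1) = w.getVert (j + 1) → i = j := by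
      intro i hi j hj hij
      exact List.inj_on_of_nodup_map hnd (List.mem_range.2 hi) (List.mem_range.2 hj)
        (by simpa using hij)
    intro i hi j hj hij
    rcases Nat.eq_zero_or_pos i with rfl | hi0
    · rcases Nat.eq_zero_or_pos j with rfl | hj0
      · rfl
      · exfalso
        have h0 : w.getVert t = w.getVert j := hv0t.trans hij
        have := hinj (t - 1) (by omega) (j - 1) (by omega) (by
          rw [show t - 1 + 1 = t by omega, show j - 1 + 1 = j by omega]; exact h0)
        omega
    · rcases Nat.eq_zero_or_pos j with rfl | hj0
      · exfalso
        have h0 : w.getVert t = w.getVert i := hv0t.trans hij.symm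
        have := hinj (t - 1) (by omega) (i - 1) (by omega) (by
          rw [show t - 1 + 1 = t by omega, show i - 1 + 1 = i by omega]; exact h0)
        omega
      · have := hinj (i - 1) (by omega) (j - 1) (by omega) (by
          rw [show i - 1 + 1 = i by omega, show j - 1 + 1 = j by omega]; exact hij)
        omega
  -- the vertex function on X
  set vfun : ℕ → Quotient (QuotientGroup.rightRel H) := fun k => w.getVert (k % t) with hvfun
  have hvadj : ∀ k, (cosetGraph T H D).Adj (vfun k) (vfun (k + 1)) := by
    intro k
    simp only [hvfun]
    rcases Nat.lt_or_ge (k % t + 1) t with hlt | hge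
    · have hmod : (k + 1) % t = k % t + 1 := by
        rw [Nat.add_mod, Nat.mod_eq_of_lt (show 1 < t by omega), Nat.mod_eq_of_lt hlt]
      rw [hmod]
      exact w.adj_getVert_succ (by
        have := Nat.mod_lt k htpos
        omega)
    · have hxlt := Nat.mod_lt k htpos
      have hkt : k % t = t - 1 := by omega
      have h1 : (k + 1) % t = 0 := by
        rw [Nat.add_mod, hkt, Nat.mod_eq_of_lt (show 1 < t by omega),
          show t - 1 + 1 = t by omega, Nat.mod_self]
      rw [h1, hkt, ← hv0t]
      have h2 := w.adj_getVert_succ (i := t - 1) (by omega)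
      rwa [show t - 1 + 1 = t by omega] at h2
  -- normalized adjacency with a D-element
  have hXadj : ∀ k, ∃ x y : T, Quotient.mk (QuotientGroup.rightRel H) x = vfun k ∧
      Quotient.mk (QuotientGroup.rightRel H) y = vfun (k + 1) ∧ y * x⁻¹ ∈ D := by
    intro k
    obtain ⟨-, x, y, hx, hy, hd | hd⟩ := hvadj k
    · exact ⟨x, y, hx, hy, hd⟩
    · refine ⟨x, y, hx, hy, ?_⟩
      have := hDsymm _ hd
      rwa [mul_inv_rev, inv_inv] at this
  -- the vertex function on Y
  set F : ℕ → Quotient (QuotientGroup.rightRel ((H.prod (⊥ : Subgroup C)))) :=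
    fun k => Quotient.mk _ ((vfun k).out, c ^ k) with hF
  have hmkY : ∀ (a b : T) (x y : C), b * a⁻¹ ∈ H → y = x →
      Quotient.mk (QuotientGroup.rightRel (H.prod (⊥ : Subgroup C))) (a, x) =
      Quotient.mk (QuotientGroup.rightRel (H.prod (⊥ : Subgroup C))) (b, y) := by
    intro a b x y hab hxy
    refine Quotient.sound ((QuotientGroup.rightRel_apply).mpr
      (Subgroup.mem_prod.2 ⟨hab, ?_⟩))
    simp [hxy, Subgroup.mem_bot]
  have hexY : ∀ (a b : T) (x y : C),
      Quotient.mk (QuotientGroup.rightRel (H.prod (⊥ : Subgroup C))) (a, x) =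
      Quotient.mk (QuotientGroup.rightRel (H.prod (⊥ : Subgroup C))) (b, y) →
      b * a⁻¹ ∈ H ∧ y = x := by
    intro a b x y hab
    have h0 : (b, y) * (a, x)⁻¹ ∈ H.prod (⊥ : Subgroup C) :=
      (QuotientGroup.rightRel_apply).mp (Quotient.exact hab)
    obtain ⟨h1, h2⟩ := Subgroup.mem_prod.1 h0
    refine ⟨h1, ?_⟩
    have h2' : y * x⁻¹ = 1 := h2
    rwa [mul_inv_eq_one] at h2'
  have hexX : ∀ (a b : T),
      Quotient.mk (QuotientGroup.rightRel H) a = Quotient.mk (QuotientGroup.rightRel H) b →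
      b * a⁻¹ ∈ H := by
    intro a b hab
    exact (QuotientGroup.rightRel_apply).mp (Quotient.exact hab)
  apply hasHamiltonCycle_of_fn _ F (t * p)
  · have h1 : t ≤ t * p := Nat.le_mul_of_pos_right t (by omega)
    omega
  · -- adjacency
    intro k
    obtain ⟨x, y, hx, hy, hd⟩ := hXadj k
    refine ⟨?_, (x, c ^ k), (y, c ^ (k + 1)), ?_, ?_, Or.inl ?_⟩
    · intro hFk
      obtain ⟨-, h2⟩ := hexY _ _ _ _ hFk
      rw [pow_succ] at h2
      exact hc1 (mul_left_cancel (h2.trans (mul_one (c ^ k)).symm))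
    · exact hmkY _ _ _ _ (hexX _ _ (hx.trans (Quotient.out_eq _).symm)) rfl
    · exact hmkY _ _ _ _ (hexX _ _ (hy.trans (Quotient.out_eq _).symm)) rfl
    · have heq : (y, c ^ (k + 1)) * (x, c ^ k)⁻¹ = (y * x⁻¹, c) := by
        rw [Prod.inv_mk, Prod.mk_mul_mk, pow_succ', mul_inv_cancel_right]
      rw [heq]
      exact Set.mem_union_left _ ⟨y * x⁻¹, hd, rfl⟩
  · -- periodicity
    have h1 : vfun (t * p) = vfun 0 := by
      simp only [hvfun, Nat.mul_mod_right, Nat.zero_mod]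
    have h2 : c ^ (t * p) = c ^ 0 := by
      rw [pow_zero, mul_comm, pow_mul, ← hc, pow_orderOf_eq_one, one_pow]
    simp only [hF, h1, h2]
  · -- injectivity
    have key : ∀ i j, i ≤ j → j < t * p → F i = F j → i = j := by
      intro i j hij hjlt hFij
      obtain ⟨h1, h2⟩ := hexY _ _ _ _ hFij
      -- h2 : c ^ j = c ^ i
      have hmodp : j % p = i % p := by
        have := pow_eq_pow_iff_modEq.1 h2
        rwa [hc] at this
      have hvv : vfun i = vfun j := by
        rw [← Quotient.out_eq (vfun i), ← Quotient.out_eq (vfun j)]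
        exact Quotient.sound ((QuotientGroup.rightRel_apply).mpr h1)
      have hmodt : i % t = j % t :=
        hgetinj _ (Nat.mod_lt _ htpos) _ (Nat.mod_lt _ htpos) hvv
      have hdt : t ∣ j - i := (Nat.modEq_iff_dvd' hij).1 hmodt
      have hdp : p ∣ j - i := (Nat.modEq_iff_dvd' hij).1 hmodp.symm
      have : t * p ∣ j - i := cop.mul_dvd_of_dvd_of_dvd hdt hdp
      rcases Nat.eq_zero_or_pos (j - i) with h0 | h0
      · omega
      · have := Nat.le_of_dvd h0 this
        omega
    intro i hi j hj hFij
    rcases Nat.le_total i j with h | h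
    · exact key i j h hj hFij
    · exact (key j i h hi hFij.symm).symm
  · -- surjectivity
    intro u
    obtain ⟨⟨s, a⟩, rfl⟩ := Quotient.exists_rep u
    obtain ⟨m, rfl⟩ := Subgroup.mem_zpowers_iff.1 (hC a)
    -- replace exponent by a natural number < p
    set m' : ℕ := (m % (p : ℤ)).toNat with hm'
    have hppos : (0:ℤ) < p := by exact_mod_cast (by omega : 0 < p)
    have hm'lt : m' < p := by
      have ha := Int.emod_lt_of_pos m hppos
      have hb := Int.emod_nonneg m (show (p:ℤ) ≠ 0 by omega)
      omega
    have hcm : c ^ m' = c ^ m := by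
      have h1 : (m' : ℤ) = m % p := by
        have h2 := Int.emod_nonneg m (show (p:ℤ) ≠ 0 by omega)
        simp [hm', Int.toNat_of_nonneg h2]
      rw [← zpow_natCast, zpow_eq_zpow_iff_modEq, hc, h1]
      exact Int.emod_emod_of_dvd m dvd_rfl
    -- find the index in the X-cycle
    have hmem := hw.mem_support (Quotient.mk (QuotientGroup.rightRel H) s)
    rw [Walk.mem_support_iff_exists_getVert] at hmem
    obtain ⟨i, hiv, hile⟩ := hmem
    have hi0 : w.getVert (i % t) = Quotient.mk (QuotientGroup.rightRel H) s := by
      rcases Nat.lt_or_ge i t with h | h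
      · rwa [Nat.mod_eq_of_lt h]
      · have : i = t := by omega
        subst this
        rw [Nat.mod_self, ← hv0t]
        exact hiv
    -- CRT
    obtain ⟨k, hk1, hk2⟩ := Nat.chineseRemainder cop (i % t) m'
    refine ⟨k % (t * p), Nat.mod_lt _ (by positivity), ?_⟩
    have hkt : (k % (t * p)) % t = i % t := by
      have h1 : k % (t * p) ≡ k [MOD t] :=
        (Nat.mod_modEq k (t * p)).of_dvd (dvd_mul_right t p)
      have h2 : k % (t * p) ≡ i % t [MOD t] := h1.trans hk1
      have h3 : k % (t * p) % t = i % t % t := h2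
      rwa [Nat.mod_mod_of_dvd i dvd_rfl] at h3
    have hkp : c ^ (k % (t * p)) = c ^ m' := by
      rw [pow_eq_pow_iff_modEq, hc]
      exact ((Nat.mod_modEq k (t * p)).of_dvd (dvd_mul_left p t)).trans hk2
    have hvk : vfun (k % (t * p)) = Quotient.mk (QuotientGroup.rightRel H) s := by
      simp only [hvfun]
      rw [hkt]
      exact hi0
    simp only [hF]
    rw [hkp, hcm]
    exact hmkY _ _ _ _ (hexX _ _ ((Quotient.out_eq _).trans hvk)) rfl
end

section
/- (Gaschütz) Let G be a finite group, K an abelian normal subgroup of G, and B a subgroup with K ≤ B ≤ G such that gcd(|K|, [G : B]) = 1. If K has a complement in B, then K has a complement in G. -/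
open Subgroup Pointwise

set_option maxHeartbeats 1000000 in
/-- Auxiliary form of Gaschütz' theorem, with an abstract coset-section `s`. -/
theorem gaschutz_aux {G : Type*} [Group G] [Finite G] (K B : Subgroup G) [hN : K.Normal]
    (hKB : K ≤ B) (hcomm : ∀ x ∈ K, ∀ y ∈ K, x * y = y * x)
    (hcop : Nat.gcd (Nat.card K) B.index = 1)
    (s : G → G)
    (hsK : ∀ g, g * (s g)⁻¹ ∈ K)
    (hskg : ∀ k ∈ K, ∀ g, s (k * g) = s g)
    (hsB : ∀ b ∈ B, ∀ b' ∈ B, s (b * b') = s b * s b') :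
    ∃ C : Subgroup G, K.IsComplement' C := by
  classical
  rcases eq_or_ne (Nat.card K) 1 with hK1 | hK1
  · exact ⟨⊤, by rw [Subgroup.card_eq_one.mp hK1]; exact Subgroup.isComplement'_bot_top⟩
  letI : Fintype (G ⧸ B) := Fintype.ofFinite _
  letI : CommGroup ↥K :=
    { (inferInstance : Group ↥K) with
      mul_comm := fun a b => Subtype.ext (hcomm ↑a a.2 ↑b b.2) }
  -- basic facts about `s`
  have hs1 : s 1 = 1 := by
    have h := hsB 1 B.one_mem 1 B.one_mem
    rw [one_mul] at h
    exact (left_eq_mul.mp h)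
  have hsK' : ∀ g, s g * g⁻¹ ∈ K := fun g => by
    have h := K.inv_mem (hsK g); rwa [mul_inv_rev, inv_inv] at h
  have hsmid : ∀ g k y, k ∈ K → s (g * (k * y)) = s (g * y) := fun g k y hk => by
    have h : g * (k * y) = (g * k * g⁻¹) * (g * y) := by group
    rw [h, hskg _ (hN.conj_mem k hk g) _]
  -- the 2-cocycle F with values in K
  have hFmem : ∀ x y : G, s x * s y * (s (x * y))⁻¹ ∈ K := fun x y => by
    have h := K.mul_mem (K.mul_mem (hsK' x) (hN.conj_mem _ (hsK' y) x)) (hsK (x * y))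
    have e : (s x * x⁻¹) * (x * (s y * y⁻¹) * x⁻¹) * ((x * y) * (s (x * y))⁻¹)
        = s x * s y * (s (x * y))⁻¹ := by group
    rwa [e] at h
  let F : G → G → ↥K := fun x y => ⟨s x * s y * (s (x * y))⁻¹, hFmem x y⟩
  have hFcoe : ∀ x y, (↑(F x y) : G) = s x * s y * (s (x * y))⁻¹ := fun _ _ => rfl
  -- conjugation action
  let aH : G → ↥K →* ↥K := fun x => MonoidHom.mk'
    (fun k => ⟨x * ↑k * x⁻¹, hN.conj_mem _ k.2 x⟩)
    (fun a b => Subtype.ext (by push_cast; group))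
  have hacoe : ∀ x (k : ↥K), (↑(aH x k) : G) = x * ↑k * x⁻¹ := fun _ _ => rfl
  have haS : ∀ x (k : ↥K), s x * ↑k * (s x)⁻¹ = ↑(aH x k) := fun x k => by
    rw [hacoe]
    have h2 : x * ↑k * x⁻¹ ∈ K := hN.conj_mem _ k.2 x
    have e : s x * ↑k * (s x)⁻¹ = (s x * x⁻¹) * (x * ↑k * x⁻¹) * (s x * x⁻¹)⁻¹ := by group
    rw [e, hcomm _ (hsK' x) _ h2]; group
  -- cocycle identity
  have hco : ∀ x y z, F x y * F (x * y) z = aH x (F y z) * F x (y * z) := fun x y z => by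
    apply Subtype.ext
    push_cast [hFcoe, ← haS x (F y z), hFcoe]
    group
  -- invariance properties of F
  have hFright : ∀ x y, ∀ k ∈ K, F x (k * y) = F x y := fun x y k hk => Subtype.ext (by
    rw [hFcoe, hFcoe, hskg k hk y, hsmid x k y hk])
  have hFleft : ∀ x y, ∀ k ∈ K, F (k * x) y = F x y := fun x y k hk => Subtype.ext (by
    rw [hFcoe, hFcoe, hskg k hk x, show k * x * y = k * (x * y) by group, hskg k hk (x * y)])
  have hFB : ∀ b ∈ B, ∀ b' ∈ B, F b b' = 1 := fun b hb b' hb' => Subtype.ext (by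
    rw [hFcoe, hsB b hb b' hb', OneMemClass.coe_one]; group)
  have hF1left : ∀ y, F 1 y = 1 := fun y => Subtype.ext (by
    rw [hFcoe, hs1, one_mul, OneMemClass.coe_one]; group)
  have hF1right : ∀ x, F x 1 = 1 := fun x => Subtype.ext (by
    rw [hFcoe, hs1, mul_one, OneMemClass.coe_one]; group)
  -- transversal from the quotient
  let T : G ⧸ B → G := fun q => q.out
  have hTq : ∀ q, ((T q : G) : G ⧸ B) = q := fun q => QuotientGroup.out_eq' q
  have hyT : ∀ (y : G) (q : G ⧸ B), ((y * T q : G) : G ⧸ B) = y • q := fun y q => by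
    rw [← smul_eq_mul]; exact MulAction.Quotient.mk_smul_out B y q
  let bq : G → G ⧸ B → G := fun y q => (T (y • q))⁻¹ * (y * T q)
  have hbq : ∀ y q, bq y q = (T (y • q))⁻¹ * (y * T q) := fun _ _ => rfl
  have hbqB : ∀ y q, bq y q ∈ B := fun y q => by
    rw [hbq]
    exact QuotientGroup.eq.mp (by rw [hTq, hyT])
  have hTbq : ∀ y q, T (y • q) * bq y q = y * T q := fun y q => by
    rw [hbq]; group
  have hKq : ∀ k ∈ K, ∀ q : G ⧸ B, k • q = q := fun k hk q => by
    have hconj : (T q)⁻¹ * k * T q ∈ B := hKB (by simpa using hN.conj_mem k hk (T q)⁻¹)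
    rw [← hyT k q, show k * T q = T q * ((T q)⁻¹ * k * T q) by group,
      QuotientGroup.mk_mul_of_mem (T q) hconj, hTq]
  -- the averaging maps
  let v : G → ↥K := fun x => ∏ q : G ⧸ B, F x (T q)
  have hv : ∀ x, v x = ∏ q : G ⧸ B, F x (T q) := fun _ => rfl
  let w : G → ↥K := fun y => ∏ q : G ⧸ B, F (T (y • q)) (bq y q)
  have hw : ∀ y, w y = ∏ q : G ⧸ B, F (T (y • q)) (bq y q) := fun _ => rfl
  let u : G → ↥K := fun x => v x * (w x)⁻¹
  have hu : ∀ x, u x = v x * (w x)⁻¹ := fun _ => rfl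
  -- main identity
  have hmain : ∀ x y, F x y ^ B.index = u x * aH x (u y) * (u (x * y))⁻¹ := by
    intro x y
    have hcard : B.index = Fintype.card (G ⧸ B) := by
      rw [← Nat.card_eq_fintype_card]; rfl
    have e1 : ∀ q : G ⧸ B,
        F x y = aH x (F y (T q)) * F x (y * T q) * (F (x * y) (T q))⁻¹ := fun q =>
      eq_mul_inv_of_mul_eq (hco x y (T q))
    have stepA : F x y ^ B.index
        = aH x (v y) * (∏ q : G ⧸ B, F x (y * T q)) * (v (x * y))⁻¹ := by
      calc F x y ^ B.index = ∏ _q : G ⧸ B, F x y := by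
            rw [Finset.prod_const, Finset.card_univ, hcard]
        _ = ∏ q : G ⧸ B, (aH x (F y (T q)) * F x (y * T q) * (F (x * y) (T q))⁻¹) :=
            Finset.prod_congr rfl (fun q _ => e1 q)
        _ = (∏ q : G ⧸ B, aH x (F y (T q))) * (∏ q : G ⧸ B, F x (y * T q)) *
              (∏ q : G ⧸ B, (F (x * y) (T q))⁻¹) := by
            rw [Finset.prod_mul_distrib, Finset.prod_mul_distrib]
        _ = aH x (v y) * (∏ q : G ⧸ B, F x (y * T q)) * (v (x * y))⁻¹ := by
            rw [← map_prod, Finset.prod_inv_distrib, hv, hv]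
    have e2 : ∀ q : G ⧸ B, F x (y * T q)
        = (aH x (F (T (y • q)) (bq y q)))⁻¹ * F x (T (y • q)) * F (x * T (y • q)) (bq y q) :=
      fun q => by
        have h := hco x (T (y • q)) (bq y q)
        rw [hTbq y q] at h
        rw [mul_assoc, h, inv_mul_cancel_left]
    have perm1 : (∏ q : G ⧸ B, F x (T (y • q))) = v x := by
      have h := Equiv.prod_comp (MulAction.toPerm y : Equiv.Perm (G ⧸ B)) (fun q => F x (T q))
      rw [hv]
      simpa [MulAction.toPerm_apply] using h
    have stepB : (∏ q : G ⧸ B, F x (y * T q))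
        = (aH x (w y))⁻¹ * v x * (∏ q : G ⧸ B, F (x * T (y • q)) (bq y q)) := by
      calc (∏ q : G ⧸ B, F x (y * T q))
          = ∏ q : G ⧸ B, ((aH x (F (T (y • q)) (bq y q)))⁻¹ * F x (T (y • q)) *
              F (x * T (y • q)) (bq y q)) := Finset.prod_congr rfl fun q _ => e2 q
        _ = (∏ q : G ⧸ B, (aH x (F (T (y • q)) (bq y q)))⁻¹) *
              (∏ q : G ⧸ B, F x (T (y • q))) * (∏ q : G ⧸ B, F (x * T (y • q)) (bq y q)) := by
            rw [Finset.prod_mul_distrib, Finset.prod_mul_distrib]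
        _ = (aH x (w y))⁻¹ * v x * (∏ q : G ⧸ B, F (x * T (y • q)) (bq y q)) := by
            rw [Finset.prod_inv_distrib, ← map_prod, hw, perm1]
    have hbb : ∀ q : G ⧸ B, bq x (y • q) * bq y q = bq (x * y) q := fun q => by
      rw [hbq, hbq, hbq, ← mul_smul]; group
    have e3 : ∀ q : G ⧸ B, F (x * T (y • q)) (bq y q)
        = (F (T (x • (y • q))) (bq x (y • q)))⁻¹ *
            F (T (x • (y • q))) (bq x (y • q) * bq y q) := fun q => by
      have h := hco (T (x • (y • q))) (bq x (y • q)) (bq y q)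
      rw [hTbq x (y • q), hFB _ (hbqB x (y • q)) _ (hbqB y q), map_one, one_mul] at h
      rw [← h, inv_mul_cancel_left]
    have perm2 : (∏ q : G ⧸ B, F (T (x • (y • q))) (bq x (y • q))) = w x := by
      have h := Equiv.prod_comp (MulAction.toPerm y : Equiv.Perm (G ⧸ B))
        (fun q => F (T (x • q)) (bq x q))
      rw [hw]
      simpa [MulAction.toPerm_apply] using h
    have stepC : (∏ q : G ⧸ B, F (x * T (y • q)) (bq y q)) = (w x)⁻¹ * w (x * y) := by
      calc (∏ q : G ⧸ B, F (x * T (y • q)) (bq y q))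
          = ∏ q : G ⧸ B, ((F (T (x • (y • q))) (bq x (y • q)))⁻¹ *
              F (T (x • (y • q))) (bq x (y • q) * bq y q)) :=
            Finset.prod_congr rfl fun q _ => e3 q
        _ = (∏ q : G ⧸ B, (F (T (x • (y • q))) (bq x (y • q)))⁻¹) *
              (∏ q : G ⧸ B, F (T (x • (y • q))) (bq x (y • q) * bq y q)) :=
            Finset.prod_mul_distrib
        _ = (w x)⁻¹ * w (x * y) := by
            rw [Finset.prod_inv_distrib, perm2]
            congr 1
            rw [hw]
            refine Finset.prod_congr rfl fun q _ => ?_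
            rw [hbb q, ← mul_smul]
    have habel : ∀ A Bk c d e f : ↥K, A * (Bk⁻¹ * c * (d⁻¹ * e)) * f⁻¹
        = c * d⁻¹ * (A * Bk⁻¹) * (e * f⁻¹) := fun A Bk c d e f => by
      simp only [mul_comm, mul_left_comm, mul_assoc]
    rw [stepA, stepB, stepC, hu, hu, hu, map_mul, map_inv]
    simp only [mul_inv_rev, inv_inv]
    exact habel _ _ _ _ _ _
  -- invert the index modulo |K|
  have hlt : 1 < Nat.card ↥K := by
    have h0 : 0 < Nat.card ↥K := Nat.card_pos
    omega
  obtain ⟨m, -, hm⟩ := Nat.exists_mul_mod_eq_one_of_coprime (Nat.coprime_comm.mp hcop) hlt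
  have hpow : ∀ k : ↥K, k ^ (B.index * m) = k := fun k => by
    have h1 : k ^ (Nat.card ↥K) = 1 := pow_card_eq_one'
    calc k ^ (B.index * m)
        = k ^ (Nat.card ↥K * (B.index * m / Nat.card ↥K) + B.index * m % Nat.card ↥K) := by
          rw [Nat.div_add_mod]
      _ = (k ^ Nat.card ↥K) ^ (B.index * m / Nat.card ↥K) * k ^ (B.index * m % Nat.card ↥K) := by
          rw [pow_add, pow_mul]
      _ = k := by rw [h1, one_pow, one_mul, hm, pow_one]
  let u' : G → ↥K := fun x => u x ^ m
  have hu' : ∀ x, u' x = u x ^ m := fun _ => rfl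
  have hsplit : ∀ x y, F x y = u' x * aH x (u' y) * (u' (x * y))⁻¹ := fun x y => by
    calc F x y = (F x y ^ B.index) ^ m := by rw [← pow_mul, hpow]
      _ = (u x * aH x (u y) * (u (x * y))⁻¹) ^ m := by rw [hmain]
      _ = u' x * aH x (u' y) * (u' (x * y))⁻¹ := by
          rw [hu', hu', hu', mul_pow, mul_pow, inv_pow, ← map_pow]
  -- the splitting homomorphism
  have hsxsy : ∀ x y, s x * s y = ↑(F x y) * s (x * y) := fun x y => by rw [hFcoe]; group
  let φ : G → G := fun x => (↑(u' x))⁻¹ * s x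
  have hφ : ∀ x, φ x = (↑(u' x))⁻¹ * s x := fun _ => rfl
  have hφmul : ∀ x y, φ (x * y) = φ x * φ y := fun x y => by
    rw [hφ, hφ, hφ]
    have hcancel : ∀ a b z : ↥K, a⁻¹ * b⁻¹ * (a * b * z) = z := fun a b z => by
      rw [mul_comm a b]; group
    have hkey : (u' x)⁻¹ * (aH x ((u' y)⁻¹)) * F x y = (u' (x * y))⁻¹ := by
      rw [map_inv, hsplit x y]; exact hcancel _ _ _
    have c1 : (s x * (↑(u' y))⁻¹ * (s x)⁻¹ : G) = ↑(aH x ((u' y)⁻¹)) := by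
      have h := haS x ((u' y)⁻¹)
      push_cast at h
      exact h
    symm
    calc (↑(u' x))⁻¹ * s x * ((↑(u' y))⁻¹ * s y)
        = (↑(u' x))⁻¹ * (s x * (↑(u' y))⁻¹ * (s x)⁻¹) * (s x * s y) := by group
      _ = (↑(u' x))⁻¹ * ↑(aH x ((u' y)⁻¹)) * (↑(F x y) * s (x * y)) := by rw [c1, hsxsy]
      _ = ↑((u' x)⁻¹ * (aH x ((u' y)⁻¹)) * F x y) * s (x * y) := by push_cast; group
      _ = (↑(u' (x * y)))⁻¹ * s (x * y) := by rw [hkey]; push_cast; group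
  let φh : G →* G := MonoidHom.mk' φ hφmul
  have hφh : ∀ x, φh x = φ x := fun _ => rfl
  -- φ kills K
  have hφK : ∀ k ∈ K, φ k = 1 := fun k hk => by
    have hsk : s k = 1 := by rw [show (k : G) = k * 1 by group, hskg k hk 1, hs1]
    have hvk : v k = 1 := by
      rw [hv]; apply Finset.prod_eq_one; intro q _
      rw [show (k : G) = k * 1 from (mul_one k).symm, hFleft 1 (T q) k hk, hF1left]
    have hwk : w k = 1 := by
      rw [hw]; apply Finset.prod_eq_one; intro q _
      have hq : k • q = q := hKq k hk q
      have hmem : (T q)⁻¹ * k * T q ∈ K := by simpa using hN.conj_mem k hk (T q)⁻¹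
      have hbqk : bq k q = ((T q)⁻¹ * k * T q) * 1 := by rw [hbq, hq]; group
      rw [hq, hbqk, hFright (T q) 1 _ hmem, hF1right]
    rw [hφ, hu', hu, hvk, hwk, hsk]
    simp
  -- disjointness
  have hdisj : Disjoint K φh.range := by
    rw [Subgroup.disjoint_def]
    intro g hgK hgD
    obtain ⟨x, rfl⟩ := MonoidHom.mem_range.mp hgD
    have hsx : s x ∈ K := by
      have h := K.mul_mem (u' x).2 hgK
      have e : (↑(u' x) : G) * φh x = s x := by rw [hφh, hφ]; group
      rwa [e] at h
    have hxK : x ∈ K := by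
      have h := K.mul_mem (hsK x) hsx
      have e : (x * (s x)⁻¹) * s x = x := by group
      rwa [e] at h
    rw [hφh]
    exact hφK x hxK
  -- K * range φ = G
  have hmulU : (K : Set G) * (φh.range : Set G) = Set.univ := by
    apply Set.eq_univ_of_forall
    intro g
    rw [Set.mem_mul]
    refine ⟨(g * (s g)⁻¹) * ↑(u' g), K.mul_mem (hsK g) (u' g).2, φ g, ⟨g, rfl⟩, ?_⟩
    rw [hφ]; group
  exact ⟨φh.range, Subgroup.isComplement'_of_disjoint_and_mul_eq_univ hdisj hmulU⟩

set_option maxHeartbeats 1000000 in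
/-- Gaschütz' theorem: if `K` is an abelian normal subgroup of a finite group `G`,
`K ≤ B ≤ G` with `gcd(|K|, [G:B]) = 1`, and `K` has a complement in `B`, then
`K` has a complement in `G`. -/
theorem stmt_14 (G : Type*) [Group G] [Finite G] (K B : Subgroup G) [K.Normal]
    (hKB : K ≤ B) (hcomm : ∀ x ∈ K, ∀ y ∈ K, x * y = y * x)
    (hcop : Nat.gcd (Nat.card K) B.index = 1)
    (hB : ∃ C : Subgroup B, (K.subgroupOf B).IsComplement' C) :
    ∃ C : Subgroup G, K.IsComplement' C := by
  classical
  have hN : K.Normal := inferInstance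
  obtain ⟨C, hC⟩ := hB
  have hCu := (Subgroup.isComplement'_def.mp hC).existsUnique
  -- decomposition of elements of B
  let dec : ∀ b : B, ↥(↑(K.subgroupOf B) : Set B) × ↥(↑C : Set B) :=
    fun b => (hCu b).exists.choose
  have hdec : ∀ b : B, ((dec b).1 : B) * ((dec b).2 : B) = b :=
    fun b => (hCu b).exists.choose_spec
  have huniq : ∀ (b k c : B), k ∈ K.subgroupOf B → c ∈ C → k * c = b →
      ((dec b).2 : B) = c := by
    intro b k c hk hc hkc
    have h2 := (hCu b).unique (y₁ := dec b) (y₂ := (⟨⟨k, hk⟩, ⟨c, hc⟩⟩ :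
      ↥(↑(K.subgroupOf B) : Set B) × ↥(↑C : Set B))) (hdec b) hkc
    exact congrArg (fun p => ((p.2 : B) : B)) h2
  have hNB : (K.subgroupOf B).Normal := hN.subgroupOf B
  -- B-level γ facts
  have hγ1B : ∀ b : B, b * ((dec b).2 : B)⁻¹ ∈ K.subgroupOf B := by
    intro b
    have h : (b : B) * ((dec b).2 : B)⁻¹ = ((dec b).1 : B) :=
      mul_inv_eq_iff_eq_mul.mpr (hdec b).symm
    rw [h]
    exact (dec b).1.2
  have hγmulB : ∀ b b' : B, ((dec (b * b')).2 : B) = ((dec b).2 : B) * ((dec b').2 : B) := by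
    intro b b'
    refine huniq (b * b')
      (((dec b).1 : B) * (((dec b).2 : B) * ((dec b').1 : B) * ((dec b).2 : B)⁻¹))
      (((dec b).2 : B) * ((dec b').2 : B))
      ((K.subgroupOf B).mul_mem (dec b).1.2 (hNB.conj_mem _ (dec b').1.2 _))
      (C.mul_mem (dec b).2.2 (dec b').2.2) ?_
    calc ((dec b).1 : B) * (((dec b).2 : B) * ((dec b').1 : B) * ((dec b).2 : B)⁻¹) *
          (((dec b).2 : B) * ((dec b').2 : B))
        = (((dec b).1 : B) * ((dec b).2 : B)) * (((dec b').1 : B) * ((dec b').2 : B)) := by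
          group
      _ = b * b' := by rw [hdec b, hdec b']
  have hγKB : ∀ (k b : B), k ∈ K.subgroupOf B → ((dec (k * b)).2 : B) = ((dec b).2 : B) := by
    intro k b hk
    refine huniq (k * b) (k * ((dec b).1 : B)) ((dec b).2 : B)
      ((K.subgroupOf B).mul_mem hk (dec b).1.2) (dec b).2.2 ?_
    rw [mul_assoc, hdec b]
  -- the G-level γ
  let γ : G → G := fun g => if h : g ∈ B then (((dec ⟨g, h⟩).2 : B) : G) else 1
  have hγdef : ∀ (g : G) (h : g ∈ B), γ g = (((dec ⟨g, h⟩).2 : B) : G) :=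
    fun g h => dif_pos h
  have hγB : ∀ (g : G) (h : g ∈ B), γ g ∈ B := fun g h => by
    rw [hγdef g h]; exact (((dec ⟨g, h⟩).2 : B)).2
  have hγ1 : ∀ (g : G) (h : g ∈ B), g * (γ g)⁻¹ ∈ K := by
    intro g h
    rw [hγdef g h]
    have hh := hγ1B ⟨g, h⟩
    rw [Subgroup.mem_subgroupOf] at hh
    exact hh
  have hγmul : ∀ b ∈ B, ∀ b' ∈ B, γ (b * b') = γ b * γ b' := by
    intro b hb b' hb'
    rw [hγdef b hb, hγdef b' hb', hγdef (b * b') (B.mul_mem hb hb')]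
    have he : (⟨b * b', B.mul_mem hb hb'⟩ : B) = ⟨b, hb⟩ * ⟨b', hb'⟩ := rfl
    rw [he, hγmulB ⟨b, hb⟩ ⟨b', hb'⟩]
    push_cast
    rfl
  have hγK : ∀ k ∈ K, ∀ b ∈ B, γ (k * b) = γ b := by
    intro k hk b hb
    rw [hγdef b hb, hγdef (k * b) (B.mul_mem (hKB hk) hb)]
    have he : (⟨k * b, B.mul_mem (hKB hk) hb⟩ : B) = ⟨k, hKB hk⟩ * ⟨b, hb⟩ := rfl
    rw [he, hγKB ⟨k, hKB hk⟩ ⟨b, hb⟩ (Subgroup.mem_subgroupOf.mpr hk)]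
  -- transversal section
  obtain ⟨out1, hout1def⟩ : ∃ o : G, o = (((1 : G) : G ⧸ B)).out := ⟨_, rfl⟩
  have hout1 : out1 ∈ B := by
    have h := QuotientGroup.eq.mp (QuotientGroup.out_eq' ((1 : G) : G ⧸ B))
    rw [mul_one] at h
    rw [hout1def]
    simpa using B.inv_mem h
  obtain ⟨r, hrdef⟩ : ∃ r : G → G, r = fun g => ((g : G) : G ⧸ B).out * out1⁻¹ := ⟨_, rfl⟩
  have hrB : ∀ g, (r g)⁻¹ * g ∈ B := by
    intro g
    have h1 : (((g : G) : G ⧸ B).out)⁻¹ * g ∈ B :=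
      QuotientGroup.eq.mp (QuotientGroup.out_eq' ((g : G) : G ⧸ B))
    have h2 : (r g)⁻¹ * g = out1 * ((((g : G) : G ⧸ B).out)⁻¹ * g) := by
      rw [hrdef]; group
    rw [h2]
    exact B.mul_mem hout1 h1
  have hrb : ∀ b ∈ B, r b = 1 := by
    intro b hb
    have h : ((b : G) : G ⧸ B) = ((1 : G) : G ⧸ B) :=
      QuotientGroup.eq.mpr (by simpa using B.inv_mem hb)
    rw [hrdef]
    simp only [h, ← hout1def]
    exact mul_inv_cancel out1
  have hrK : ∀ k ∈ K, ∀ g, r (k * g) = r g := by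
    intro k hk g
    have h : ((k * g : G) : G ⧸ B) = ((g : G) : G ⧸ B) := by
      apply QuotientGroup.eq.mpr
      have h2 : (k * g)⁻¹ * g = g⁻¹ * k⁻¹ * g := by group
      rw [h2]
      exact hKB (by simpa using hN.conj_mem k⁻¹ (K.inv_mem hk) g⁻¹)
    rw [hrdef]
    simp only [h]
  -- the section s
  obtain ⟨s, hsdef⟩ : ∃ s : G → G, s = fun g => r g * γ ((r g)⁻¹ * g) := ⟨_, rfl⟩
  have hsK : ∀ g, g * (s g)⁻¹ ∈ K := by
    intro g
    have h : g * (s g)⁻¹ = r g * (((r g)⁻¹ * g) * (γ ((r g)⁻¹ * g))⁻¹) * (r g)⁻¹ := by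
      rw [hsdef]; group
    rw [h]
    exact hN.conj_mem _ (hγ1 _ (hrB g)) (r g)
  have hskg : ∀ k ∈ K, ∀ g, s (k * g) = s g := by
    intro k hk g
    have hconj : (r g)⁻¹ * k * r g ∈ K := by simpa using hN.conj_mem k hk (r g)⁻¹
    rw [hsdef]
    simp only [hrK k hk g]
    have h1 : (r g)⁻¹ * (k * g) = ((r g)⁻¹ * k * r g) * ((r g)⁻¹ * g) := by group
    rw [h1, hγK _ hconj _ (hrB g)]
  have hsb : ∀ b ∈ B, s b = γ b := by
    intro b hb
    rw [hsdef]
    simp only [hrb b hb]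
    rw [inv_one, one_mul, one_mul]
  have hsB : ∀ b ∈ B, ∀ b' ∈ B, s (b * b') = s b * s b' := by
    intro b hb b' hb'
    rw [hsb b hb, hsb b' hb', hsb (b * b') (B.mul_mem hb hb'), hγmul b hb b' hb']
  exact gaschutz_aux K B hKB hcomm hcop s hsK hskg hsB
end
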